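/- Let u be a three times differentiable positive real function on an open interval I, and define the chain terms with k = 4 and m = 1/2 (real power): P_0 = u, P_1 = u' + 4·u^{3/2}, P_2 = (P_1)' + 4·u^{1/2}·P_1, P_3 = (P_2)' + 4·u^{1/2}·P_2. Then P_2(t) = u''(t) + 10·u(t)^{1/2}·u'(t) + 16·u(t)^2, and √(u(t))·P_3(t) = √(u(t))·u'''(t) + 14·u''(t)·u(t) + 5·u'(t)^2 + 72·u'(t)·u(t)·√(u(t)) + 64·u(t)^3 for all t ∈ I. In particular, a positive function u solves √u·u''' + 14·u''·u + 5·u'^2 + 72·u'·u·√u + 64·u^3 = 0 on I if and only if P_3 = 0 on I. -/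

import Mathlib

theorem chain_with_half_integer_exponent
    (I : Set ℝ) (hIopen : IsOpen I) (hIconn : I.OrdConnected)
    (u : ℝ → ℝ) (hupos : ∀ t ∈ I, 0 < u t)
    (hd1 : DifferentiableOn ℝ u I)
    (hd2 : DifferentiableOn ℝ (deriv u) I)
    (hd3 : DifferentiableOn ℝ (deriv (deriv u)) I)
    (P₁ P₂ P₃ : ℝ → ℝ)
    (hP₁ : ∀ t, P₁ t = deriv u t + 4 * u t ^ ((3 : ℝ) / 2))
    (hP₂ : ∀ t, P₂ t = deriv P₁ t + 4 * u t ^ ((1 : ℝ) / 2) * P₁ t)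
    (hP₃ : ∀ t, P₃ t = deriv P₂ t + 4 * u t ^ ((1 : ℝ) / 2) * P₂ t) :
    (∀ t ∈ I, P₂ t =
      deriv (deriv u) t + 10 * u t ^ ((1 : ℝ) / 2) * deriv u t + 16 * u t ^ 2) ∧
    (∀ t ∈ I, Real.sqrt (u t) * P₃ t =
      Real.sqrt (u t) * deriv (deriv (deriv u)) t + 14 * deriv (deriv u) t * u t +
        5 * deriv u t ^ 2 + 72 * deriv u t * u t * Real.sqrt (u t) + 64 * u t ^ 3) ∧
    ((∀ t ∈ I, Real.sqrt (u t) * deriv (deriv (deriv u)) t + 14 * deriv (deriv u) t * u t +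
        5 * deriv u t ^ 2 + 72 * deriv u t * u t * Real.sqrt (u t) + 64 * u t ^ 3 = 0) ↔
      (∀ t ∈ I, P₃ t = 0)) := by
  have hmem : ∀ t ∈ I, I ∈ nhds t := fun t ht => hIopen.mem_nhds ht
  have hP1fun : P₁ = fun s => deriv u s + 4 * u s ^ ((3:ℝ)/2) := funext hP₁
  -- derivative of P₁ on I
  have hP1deriv : ∀ t ∈ I, HasDerivAt P₁
      (deriv (deriv u) t + 6 * u t ^ ((1:ℝ)/2) * deriv u t) t := by
    intro t ht
    have hu : HasDerivAt u (deriv u t) t :=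
      ((hd1 t ht).differentiableAt (hmem t ht)).hasDerivAt
    have hu2 : HasDerivAt (deriv u) (deriv (deriv u) t) t :=
      ((hd2 t ht).differentiableAt (hmem t ht)).hasDerivAt
    have hpos := hupos t ht
    have h32 : HasDerivAt (fun s => u s ^ ((3:ℝ)/2))
        (deriv u t * ((3:ℝ)/2) * u t ^ ((3:ℝ)/2 - 1)) t :=
      hu.rpow_const (Or.inl hpos.ne')
    rw [hP1fun]
    have h := hu2.add (h32.const_mul 4)
    convert h using 1
    · rfl
    · rfl
    · rfl
    rw [show (3:ℝ)/2 - 1 = 1/2 by norm_num]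
    ring
  -- explicit form of P₂ on I
  have key2 : ∀ t ∈ I, P₂ t =
      deriv (deriv u) t + 10 * u t ^ ((1 : ℝ) / 2) * deriv u t + 16 * u t ^ 2 := by
    intro t ht
    have hpos := hupos t ht
    have hmul : u t ^ ((1:ℝ)/2) * u t ^ ((3:ℝ)/2) = u t ^ 2 := by
      rw [← Real.rpow_add hpos, show (1:ℝ)/2 + 3/2 = ((2:ℕ):ℝ) by norm_num,
        Real.rpow_natCast]
    rw [hP₂ t, (hP1deriv t ht).deriv, hP₁ t]
    nlinarith [hmul]
  have key3 : ∀ t ∈ I, Real.sqrt (u t) * P₃ t =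
      Real.sqrt (u t) * deriv (deriv (deriv u)) t + 14 * deriv (deriv u) t * u t +
        5 * deriv u t ^ 2 + 72 * deriv u t * u t * Real.sqrt (u t) + 64 * u t ^ 3 := by
    intro t ht
    have hpos := hupos t ht
    have hu : HasDerivAt u (deriv u t) t :=
      ((hd1 t ht).differentiableAt (hmem t ht)).hasDerivAt
    have hu2 : HasDerivAt (deriv u) (deriv (deriv u) t) t :=
      ((hd2 t ht).differentiableAt (hmem t ht)).hasDerivAt
    have hu3 : HasDerivAt (deriv (deriv u)) (deriv (deriv (deriv u)) t) t :=
      ((hd3 t ht).differentiableAt (hmem t ht)).hasDerivAt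
    have hhalf : HasDerivAt (fun s => u s ^ ((1:ℝ)/2))
        (deriv u t * ((1:ℝ)/2) * u t ^ ((1:ℝ)/2 - 1)) t :=
      hu.rpow_const (Or.inl hpos.ne')
    -- G is the explicit form of P₂
    set G : ℝ → ℝ := fun s =>
      deriv (deriv u) s + 10 * u s ^ ((1:ℝ)/2) * deriv u s + 16 * u s ^ 2 with hGdef
    have hEq : P₂ =ᶠ[nhds t] G :=
      Filter.eventuallyEq_of_mem (hmem t ht) (fun s hs => key2 s hs)
    have hGd : HasDerivAt G
        (deriv (deriv (deriv u)) t +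
          (10 * (deriv u t * ((1:ℝ)/2) * u t ^ ((1:ℝ)/2 - 1)) * deriv u t +
            10 * u t ^ ((1:ℝ)/2) * deriv (deriv u) t) +
          16 * (2 * u t ^ 1 * deriv u t)) t := by
      have h1 : HasDerivAt (fun s => 10 * u s ^ ((1:ℝ)/2) * deriv u s)
          (10 * (deriv u t * ((1:ℝ)/2) * u t ^ ((1:ℝ)/2 - 1)) * deriv u t +
            10 * u t ^ ((1:ℝ)/2) * deriv (deriv u) t) t := by
        exact (hhalf.const_mul 10).mul hu2
      have h2 : HasDerivAt (fun s => 16 * u s ^ 2) (16 * (2 * u t ^ 1 * deriv u t)) t :=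
        (hu.pow 2).const_mul 16
      exact (hu3.add h1).add h2
    have hderivP2 : deriv P₂ t = deriv G t := hEq.deriv_eq
    have hP3 : P₃ t = deriv G t + 4 * u t ^ ((1:ℝ)/2) * G t := by
      rw [hP₃ t, hderivP2, key2 t ht]
    rw [hP3, hGd.deriv]
    rw [Real.sqrt_eq_rpow]
    set a := u t ^ ((1:ℝ)/2) with ha
    set b := u t ^ ((1:ℝ)/2 - 1) with hb
    have haa : a * a = u t := by
      rw [ha, ← Real.rpow_add hpos]
      norm_num
    have hab : a * b = 1 := by
      rw [ha, hb, ← Real.rpow_add hpos]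
      norm_num
    simp only [hGdef]
    set u0 := u t
    set u1 := deriv u t
    set u2 := deriv (deriv u) t
    set u3 := deriv (deriv (deriv u)) t
    linear_combination (5*u1^2) * hab + (14*u2 + 40*u1*a + 64*u0^2) * haa
  refine ⟨key2, key3, ?_, ?_⟩
  · intro h t ht
    have hsq : 0 < Real.sqrt (u t) := Real.sqrt_pos.mpr (hupos t ht)
    have h0 : Real.sqrt (u t) * P₃ t = 0 := by rw [key3 t ht]; exact h t ht
    exact (mul_eq_zero.mp h0).resolve_left hsq.ne'
  · intro h t ht
    rw [← key3 t ht, h t ht, mul_zero]
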